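/- Let $\Phi \in H^\infty_{\mathcal{B}(E_2, E)}(\mathbb{T})$ be inner and $\mathcal{G} \subseteq \mathcal{G}_\Phi$ a nonzero subset. Then $\mathcal{M} = \overline{\mathrm{span}}(\mathcal{G}) \oplus (\Phi H^2_{E_2}(\mathbb{T}) \oplus \{0\})$ is a closed subspace of $H^2_E(\mathbb{T}) \oplus E$ invariant under the Brownian shift $B^E_{\sigma, e^{i\theta}}$, and $\mathcal{M} \not\subseteq H^2_E(\mathbb{T}) \oplus \{0\}$. -/

import Mathlib

open Complex

noncomputable section
set_option linter.unusedSectionVars false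

/-- The `E`-valued Hardy space `H²_E(𝕋)`, modeled by the ℓ² space of its
Taylor/Fourier coefficient sequences. -/
abbrev Hardy (E : Type*) [NormedAddCommGroup E] [InnerProductSpace ℂ E] [CompleteSpace E] :=
  lp (fun _ : ℕ => E) 2

variable {E : Type*} [NormedAddCommGroup E] [InnerProductSpace ℂ E] [CompleteSpace E]

def shiftSeq (f : ℕ → E) : ℕ → E
  | 0 => 0
  | n + 1 => f n

lemma memℓp_shiftSeq {f : ℕ → E} (hf : Memℓp f 2) : Memℓp (shiftSeq f) 2 := by
  have h := hf.summable (by norm_num)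
  exact memℓp_gen ((summable_nat_add_iff 1).mp (by simpa [shiftSeq] using h))

/-- The shift `S_E : f ↦ z f` on `H²_E(𝕋)`. -/
def shiftOp (f : Hardy E) : Hardy E := ⟨shiftSeq f, memℓp_shiftSeq (lp.memℓp f)⟩

/-- The inclusion `i_E : E → H²_E(𝕋)` sending `x` to the constant function `x`. -/
def inclOp (y : E) : Hardy E := lp.single 2 (0 : ℕ) y

/-- The Brownian shift `B^E_{σ, e^{iθ}}` of covariance `σ` and angle `θ` on
`H²_E(𝕋) ⊕ E`: `(f, y) ↦ (zf + σ y, e^{iθ} y)`. -/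
def BS (σ θ : ℝ) (v : Hardy E × E) : Hardy E × E :=
  (shiftOp v.1 + (σ : ℂ) • inclOp v.2, Complex.exp (θ * I) • v.2)

local notation "⟪" x ", " y "⟫" => @inner ℂ _ _ x y

/-- Backward (left) shift on `H²_E`. -/
def bshiftOp (f : Hardy E) : Hardy E :=
  ⟨fun n => f (n + 1), by
    have h := (lp.memℓp f).summable (p := 2) (by norm_num)
    exact memℓp_gen ((summable_nat_add_iff (f := fun n => ‖f n‖ ^ (2 : ENNReal).toReal) 1).mpr h)⟩

@[simp] lemma bshiftOp_apply (f : Hardy E) (n : ℕ) : (bshiftOp f : ∀ _ : ℕ, E) n = f (n + 1) := rfl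

@[simp] lemma shiftOp_apply_zero (f : Hardy E) : (shiftOp f : ∀ _ : ℕ, E) 0 = 0 := rfl
@[simp] lemma shiftOp_apply_succ (f : Hardy E) (n : ℕ) :
    (shiftOp f : ∀ _ : ℕ, E) (n + 1) = f n := rfl

lemma inner_shiftOp_left (a b : Hardy E) : ⟪shiftOp a, b⟫ = ⟪a, bshiftOp b⟫ := by
  rw [lp.inner_eq_tsum, lp.inner_eq_tsum,
    Summable.tsum_eq_zero_add (lp.summable_inner (𝕜 := ℂ) (shiftOp a) b)]
  simp

lemma bshiftOp_shiftOp (a : Hardy E) : bshiftOp (shiftOp a) = a :=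
  lp.ext (funext fun n => rfl)

lemma inner_shiftOp_shiftOp (a b : Hardy E) : ⟪shiftOp a, shiftOp b⟫ = ⟪a, b⟫ := by
  rw [inner_shiftOp_left, bshiftOp_shiftOp]

lemma inner_shiftOp_single (a : Hardy E) (y : E) : ⟪shiftOp a, inclOp y⟫ = 0 := by
  have h := lp.inner_single_right (𝕜 := ℂ) (0 : ℕ) y (shiftOp a)
  rw [inclOp, h]
  simp

lemma inner_shiftOp_iter (n : ℕ) (a b : Hardy E) :
    ⟪shiftOp^[n] a, b⟫ = ⟪a, bshiftOp^[n] b⟫ := by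
  induction n generalizing b with
  | zero => rfl
  | succ n ih =>
    rw [Function.iterate_succ_apply', inner_shiftOp_left, ih, ← Function.iterate_succ_apply]

lemma bshiftOp_iter_apply (n : ℕ) (g : Hardy E) (k : ℕ) :
    (bshiftOp^[n] g : ∀ _ : ℕ, E) k = g (k + n) := by
  induction n generalizing k with
  | zero => rfl
  | succ n ih =>
    rw [Function.iterate_succ_apply', bshiftOp_apply, ih]
    rw [Nat.add_right_comm, Nat.add_assoc]

lemma tendsto_norm_bshiftOp_iter (g : Hardy E) :
    Filter.Tendsto (fun n => ‖bshiftOp^[n] g‖) Filter.atTop (nhds 0) := by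
  have hs : Summable (fun k => ‖g k‖ ^ (2 : ℝ)) := by
    have := (lp.memℓp g).summable (p := 2) (by norm_num)
    simpa using this
  have ht : Filter.Tendsto (fun n => ∑' k, ‖g (k + n)‖ ^ (2 : ℝ)) Filter.atTop (nhds 0) :=
    tendsto_sum_nat_add (fun k => ‖g k‖ ^ (2 : ℝ))
  have hcont : Filter.Tendsto (fun t : ℝ => t ^ (1 / 2 : ℝ))
      (nhds 0) (nhds 0) := by
    have := (Real.continuousAt_rpow_const 0 (1 / 2) (Or.inr (by norm_num))).tendsto
    simpa [Real.zero_rpow (by norm_num : (1 / 2 : ℝ) ≠ 0)] using this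
  have := hcont.comp ht
  refine this.congr fun n => ?_
  have hnorm := lp.norm_eq_tsum_rpow (p := 2) (by norm_num) (bshiftOp^[n] g)
  rw [hnorm]
  have h2 : ((2 : ENNReal)).toReal = (2 : ℝ) := by norm_num
  rw [h2]
  simp only [Function.comp_apply]
  congr 1
  exact tsum_congr fun k => by rw [bshiftOp_iter_apply]

lemma shiftOp_add (a b : Hardy E) : shiftOp (a + b) = shiftOp a + shiftOp b := by
  apply lp.ext
  funext n
  cases n with
  | zero => simp [lp.coeFn_add]
  | succ n => simp [lp.coeFn_add]

lemma shiftOp_smul (c : ℂ) (a : Hardy E) : shiftOp (c • a) = c • shiftOp a := by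
  apply lp.ext
  funext n
  cases n with
  | zero => simp [lp.coeFn_smul]
  | succ n => simp [lp.coeFn_smul]

lemma norm_shiftOp (a : Hardy E) : ‖shiftOp a‖ = ‖a‖ := by
  rw [@norm_eq_sqrt_re_inner ℂ, @norm_eq_sqrt_re_inner ℂ, inner_shiftOp_shiftOp]

lemma inclOp_apply (y : E) (n : ℕ) :
    (inclOp y : ∀ _ : ℕ, E) n = if n = 0 then y else 0 := by
  rcases n with _ | n
  · simp [inclOp, lp.single_apply_self]
  · simp [inclOp, lp.single_apply_ne (E := fun _ : ℕ => E) 2 0 y (Nat.succ_ne_zero n)]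

lemma inclOp_add (y z : E) : inclOp (y + z) = inclOp y + inclOp z := by
  apply lp.ext
  funext n
  simp only [lp.coeFn_add, Pi.add_apply, inclOp_apply]
  split <;> simp

lemma inclOp_smul (c : ℂ) (y : E) : inclOp (c • y) = c • inclOp y := by
  rw [inclOp, inclOp, lp.single_smul]

lemma inclOp_zero : inclOp (0 : E) = 0 := by
  apply lp.ext
  funext n
  simp [inclOp_apply]

lemma norm_inclOp (y : E) : ‖inclOp y‖ = ‖y‖ :=
  lp.norm_single (E := fun _ : ℕ => E) (p := 2) (by norm_num) 0 y

/-- The shift as a continuous linear map. -/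
def shiftCLM : Hardy E →L[ℂ] Hardy E :=
  LinearMap.mkContinuous
    { toFun := shiftOp, map_add' := shiftOp_add, map_smul' := shiftOp_smul } 1
    (fun a => by show ‖shiftOp a‖ ≤ 1 * ‖a‖; rw [norm_shiftOp, one_mul])

@[simp] lemma shiftCLM_apply (a : Hardy E) : shiftCLM a = shiftOp a := rfl

/-- The inclusion as a continuous linear map. -/
def inclCLM : E →L[ℂ] Hardy E :=
  LinearMap.mkContinuous
    { toFun := inclOp, map_add' := inclOp_add, map_smul' := inclOp_smul } 1
    (fun y => by show ‖inclOp y‖ ≤ 1 * ‖y‖; rw [norm_inclOp, one_mul])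

@[simp] lemma inclCLM_apply (y : E) : inclCLM y = inclOp y := rfl

/-- The Brownian shift as a continuous linear map. -/
def BSCLM (σ θ : ℝ) : (Hardy E × E) →L[ℂ] (Hardy E × E) :=
  (shiftCLM.comp (ContinuousLinearMap.fst ℂ (Hardy E) E) +
    (σ : ℂ) • inclCLM.comp (ContinuousLinearMap.snd ℂ (Hardy E) E)).prod
    (Complex.exp (θ * I) • ContinuousLinearMap.snd ℂ (Hardy E) E)

lemma BSCLM_apply (σ θ : ℝ) (v : Hardy E × E) : BSCLM σ θ v = BS σ θ v := rfl

section Key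

variable {E₂ : Type*} [NormedAddCommGroup E₂] [InnerProductSpace ℂ E₂] [CompleteSpace E₂]

/-- Key orthogonality: elements of `𝒢_Φ` are orthogonal to `Φ H²`. -/
lemma key_orth (σ θ : ℝ) (T : Hardy E₂ →L[ℂ] Hardy E)
    (hTiso : ∀ h : Hardy E₂, ‖T h‖ = ‖h‖)
    (hTcomm : ∀ h : Hardy E₂, T (shiftOp h) = shiftOp (T h))
    (g : Hardy E) (y : E) (x : E₂)
    (hrel : shiftOp g + (σ : ℂ) • inclOp y = Complex.exp (θ * I) • g + T (inclOp x)) :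
    ∀ f : Hardy E₂, ⟪T f, g⟫ = 0 := by
  set lam : ℂ := Complex.exp (θ * I) with hlam
  have Tiso : Hardy E₂ →ₗᵢ[ℂ] Hardy E := ⟨T.toLinearMap, hTiso⟩
  have hTinner : ∀ a b : Hardy E₂, ⟪T a, T b⟫ = ⟪a, b⟫ := fun a b =>
    LinearIsometry.inner_map_map ⟨T.toLinearMap, hTiso⟩ a b
  -- Step A : recurrence
  have stepA : ∀ f : Hardy E₂, ⟪T f, g⟫ = lam * ⟪T (shiftOp f), g⟫ := by
    intro f
    have h1 : ⟪shiftOp (T f), shiftOp g + (σ : ℂ) • inclOp y⟫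
        = ⟪shiftOp (T f), lam • g + T (inclOp x)⟫ := by rw [hrel]
    rw [inner_add_right, inner_add_right, inner_shiftOp_shiftOp, inner_smul_right,
      inner_shiftOp_single, mul_zero, add_zero, inner_smul_right, ← hTcomm,
      hTinner, inner_shiftOp_single, add_zero] at h1
    rw [h1, hTcomm]
  -- Step B : iterate the recurrence
  have stepB : ∀ (n : ℕ) (f : Hardy E₂), ⟪T f, g⟫ = lam ^ n * ⟪T (shiftOp^[n] f), g⟫ := by
    intro n
    induction n with
    | zero => intro f; simp
    | succ n ih =>
      intro f
      rw [ih f, stepA (shiftOp^[n] f), pow_succ,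
        show shiftOp (shiftOp^[n] f) = shiftOp^[n + 1] f from
          (Function.iterate_succ_apply' shiftOp n f).symm]
      ring
  -- T intertwines iterates
  have stepC : ∀ (n : ℕ) (f : Hardy E₂), T (shiftOp^[n] f) = shiftOp^[n] (T f) := by
    intro n
    induction n with
    | zero => intro f; rfl
    | succ n ih =>
      intro f
      rw [Function.iterate_succ_apply', Function.iterate_succ_apply', hTcomm, ih]
  intro f
  have habs : ∀ n : ℕ, ‖⟪T f, g⟫‖ ≤ ‖T f‖ * ‖bshiftOp^[n] g‖ := by
    intro n
    have h1 : ⟪T f, g⟫ = lam ^ n * ⟪(T f), bshiftOp^[n] g⟫ := by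
      rw [stepB n f, stepC n f, inner_shiftOp_iter]
    have h2 : ‖lam‖ = 1 := by
      rw [hlam, Complex.norm_exp_ofReal_mul_I]
    calc ‖⟪T f, g⟫‖ = ‖lam‖ ^ n * ‖⟪(T f), bshiftOp^[n] g⟫‖ := by
          rw [h1, norm_mul, norm_pow]
      _ = ‖⟪(T f), bshiftOp^[n] g⟫‖ := by rw [h2, one_pow, one_mul]
      _ ≤ ‖T f‖ * ‖bshiftOp^[n] g‖ := norm_inner_le_norm _ _
  have hlim : Filter.Tendsto (fun n => ‖T f‖ * ‖bshiftOp^[n] g‖) Filter.atTop (nhds 0) := by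
    have := (tendsto_norm_bshiftOp_iter g).const_mul ‖T f‖
    simpa using this
  have : ‖⟪T f, g⟫‖ ≤ 0 := ge_of_tendsto' hlim habs
  have : ‖⟪T f, g⟫‖ = 0 := le_antisymm this (norm_nonneg _)
  exact norm_eq_zero.mp this

end Key

set_option maxHeartbeats 1000000 in
/-- Theorem 2.5: for every nonzero subset `𝒢 ⊆ 𝒢_Φ`, the subspace
`M = span(𝒢)‾ ⊔ (Φ H²_{E₂} ⊕ {0})` is a closed subspace of `H²_E(𝕋) ⊕ E` which is
invariant under the Brownian shift and is of Type II (not contained in `H²_E(𝕋) ⊕ {0}`). -/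
theorem typeII_construction
    {E₂ : Type*} [NormedAddCommGroup E₂] [InnerProductSpace ℂ E₂] [CompleteSpace E₂]
    (σ θ : ℝ) (hσ : 0 < σ) (hθ : θ ∈ Set.Ico 0 (2 * Real.pi))
    (T : Hardy E₂ →L[ℂ] Hardy E)
    (hTiso : ∀ h : Hardy E₂, ‖T h‖ = ‖h‖)
    (hTcomm : ∀ h : Hardy E₂, T (shiftOp h) = shiftOp (T h))
    (G : Set (Hardy E × E))
    (hG : G ⊆ {p : Hardy E × E | ∃ x : E₂,
      shiftOp p.1 + (σ : ℂ) • inclOp p.2 = Complex.exp (θ * I) • p.1 + T (inclOp x)})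
    (hGne : ∃ v ∈ G, v ≠ 0) :
    ∀ M : Submodule ℂ (Hardy E × E),
      M = (Submodule.span ℂ G).topologicalClosure ⊔
            LinearMap.range (LinearMap.prod T.toLinearMap (0 : Hardy E₂ →ₗ[ℂ] E)) →
      IsClosed (M : Set (Hardy E × E)) ∧ (∀ v ∈ M, BS σ θ v ∈ M) ∧
        ¬ ((M : Set (Hardy E × E)) ⊆ {p : Hardy E × E | p.2 = 0}) := by
  intro M hM
  subst hM
  set lam : ℂ := Complex.exp (θ * I) with hlam
  set A := (Submodule.span ℂ G).topologicalClosure with hA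
  set L := LinearMap.prod T.toLinearMap (0 : Hardy E₂ →ₗ[ℂ] E) with hL
  set B := LinearMap.range L with hB
  have hLapply : ∀ h : Hardy E₂, L h = (T h, 0) := fun h => rfl
  -- orthogonality of G to the range of T
  have key : ∀ p ∈ G, ∀ f : Hardy E₂, ⟪T f, p.1⟫ = 0 := by
    intro p hp
    obtain ⟨x, hx⟩ := hG hp
    exact key_orth σ θ T hTiso hTcomm p.1 p.2 x hx
  -- adjoint facts
  have hadj_zero : ∀ p ∈ G, ContinuousLinearMap.adjoint T p.1 = 0 := by
    intro p hp
    have h : ⟪ContinuousLinearMap.adjoint T p.1, ContinuousLinearMap.adjoint T p.1⟫ = 0 := by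
      rw [ContinuousLinearMap.adjoint_inner_left, ← inner_conj_symm,
        key p hp (ContinuousLinearMap.adjoint T p.1), map_zero]
    exact inner_self_eq_zero.mp h
  set C : (Hardy E × E) →L[ℂ] Hardy E₂ :=
    (ContinuousLinearMap.adjoint T).comp (ContinuousLinearMap.fst ℂ (Hardy E) E) with hC
  have hCapply : ∀ v : Hardy E × E, C v = ContinuousLinearMap.adjoint T v.1 := fun v => rfl
  have hGK : G ⊆ (LinearMap.ker C.toLinearMap : Set (Hardy E × E)) := by
    intro p hp
    simp only [SetLike.mem_coe, LinearMap.mem_ker, ContinuousLinearMap.coe_coe]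
    rw [hCapply]
    exact hadj_zero p hp
  have hAK : A ≤ LinearMap.ker C.toLinearMap :=
    Submodule.topologicalClosure_minimal _ (Submodule.span_le.mpr hGK)
      (ContinuousLinearMap.isClosed_ker C)
  have hTstarT : ∀ h : Hardy E₂, ContinuousLinearMap.adjoint T (T h) = h := by
    intro h
    apply ext_inner_right ℂ
    intro f'
    rw [ContinuousLinearMap.adjoint_inner_left]
    exact LinearIsometry.inner_map_map ⟨T.toLinearMap, hTiso⟩ h f'
  set P : (Hardy E × E) →L[ℂ] Hardy E × E :=
    (T.comp C).prod (0 : (Hardy E × E) →L[ℂ] E) with hP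
  have hPapply : ∀ v : Hardy E × E,
      P v = (T (ContinuousLinearMap.adjoint T v.1), 0) := fun v => rfl
  have hPA : ∀ a ∈ A, P a = 0 := by
    intro a ha
    have hz : ContinuousLinearMap.adjoint T a.1 = 0 := hAK ha
    rw [hPapply, hz, map_zero]
    rfl
  have hPB : ∀ h : Hardy E₂, P (L h) = L h := by
    intro h
    rw [hPapply, hLapply]
    show (T ((ContinuousLinearMap.adjoint T) (T h)), (0 : E)) = (T h, 0)
    rw [hTstarT]
  have hPrange : ∀ v : Hardy E × E, P v ∈ B := by
    intro v
    refine ⟨ContinuousLinearMap.adjoint T v.1, ?_⟩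
    rw [hLapply, hPapply]
  -- closedness
  have hset : ((A ⊔ B : Submodule ℂ (Hardy E × E)) : Set (Hardy E × E))
      = (fun v => v - P v) ⁻¹' (A : Set (Hardy E × E)) := by
    ext v
    simp only [Set.mem_preimage, SetLike.mem_coe]
    constructor
    · intro hv
      obtain ⟨a, ha, b, hb, rfl⟩ := Submodule.mem_sup.mp hv
      obtain ⟨h2, rfl⟩ := hb
      have hPab : P (a + L h2) = L h2 := by
        rw [map_add, hPA a ha, hPB h2, zero_add]
      rw [hPab]
      simpa using ha
    · intro hv
      refine Submodule.mem_sup.mpr ⟨v - P v, hv, P v, hPrange v, ?_⟩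
      abel
  have hclosed : IsClosed ((A ⊔ B : Submodule ℂ (Hardy E × E)) : Set (Hardy E × E)) := by
    rw [hset]
    exact (Submodule.isClosed_topologicalClosure _).preimage (continuous_id.sub P.continuous)
  refine ⟨hclosed, ?_, ?_⟩
  · -- invariance
    have hinv : A ⊔ B ≤ Submodule.comap ((BSCLM σ θ).toLinearMap) (A ⊔ B) := by
      refine sup_le ?_ ?_
      · refine Submodule.topologicalClosure_minimal _ ?_ ?_
        · rw [Submodule.span_le]
          intro p hp
          obtain ⟨x, hx⟩ := hG hp
          simp only [SetLike.mem_coe, Submodule.mem_comap]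
          have hBp : BSCLM σ θ p = lam • p + L (inclOp x) := by
            rw [BSCLM_apply]
            unfold BS
            refine Prod.ext ?_ ?_
            · exact hx
            · show lam • p.2 = lam • p.2 + 0
              rw [add_zero]
          rw [ContinuousLinearMap.coe_coe, hBp]
          refine Submodule.add_mem _ ?_ ?_
          · exact Submodule.smul_mem _ _ (Submodule.mem_sup_left
              (Submodule.le_topologicalClosure _ (Submodule.subset_span hp)))
          · exact Submodule.mem_sup_right ⟨inclOp x, rfl⟩
        · show IsClosed ((Submodule.comap ((BSCLM σ θ).toLinearMap) (A ⊔ B) :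
              Submodule ℂ (Hardy E × E)) : Set (Hardy E × E))
          have : ((Submodule.comap ((BSCLM σ θ).toLinearMap) (A ⊔ B) :
              Submodule ℂ (Hardy E × E)) : Set (Hardy E × E))
              = (BSCLM σ θ) ⁻¹' ((A ⊔ B : Submodule ℂ (Hardy E × E)) : Set (Hardy E × E)) := rfl
          rw [this]
          exact hclosed.preimage (BSCLM σ θ).continuous
      · rintro v ⟨h2, rfl⟩
        simp only [Submodule.mem_comap]
        have hBL : BSCLM σ θ (L h2) = L (shiftOp h2) := by
          rw [BSCLM_apply]
          unfold BS
          refine Prod.ext ?_ ?_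
          · show shiftOp (T h2) + (σ : ℂ) • inclOp (0 : E) = T (shiftOp h2)
            rw [inclOp_zero, smul_zero, add_zero, hTcomm]
          · show lam • (0 : E) = (0 : E)
            rw [smul_zero]
        rw [ContinuousLinearMap.coe_coe, hBL]
        exact Submodule.mem_sup_right ⟨shiftOp h2, rfl⟩
    intro v hv
    have hv' := hinv hv
    rw [Submodule.mem_comap, ContinuousLinearMap.coe_coe, BSCLM_apply] at hv'
    exact hv'
  · -- Type II
    intro hsub
    obtain ⟨v, hvG, hvne⟩ := hGne
    have hvM : v ∈ A ⊔ B := Submodule.mem_sup_left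
      (Submodule.le_topologicalClosure _ (Submodule.subset_span hvG))
    have h2 : v.2 = 0 := hsub hvM
    obtain ⟨x, hx⟩ := hG hvG
    rw [h2, inclOp_zero, smul_zero, add_zero] at hx
    have hk := key v hvG
    have hconj : (starRingEnd ℂ) lam * lam = 1 := by
      rw [hlam, ← Complex.exp_conj, ← Complex.exp_add]
      have hzero : (starRingEnd ℂ) (↑θ * I) + ↑θ * I = 0 := by
        rw [map_mul, Complex.conj_I, Complex.conj_ofReal]
        ring
      rw [hzero, Complex.exp_zero]
    have hz1 : ⟪T (inclOp x), lam • v.1⟫ = 0 := by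
      rw [inner_smul_right, hk (inclOp x), mul_zero]
    have hz2 : ⟪lam • v.1, T (inclOp x)⟫ = 0 := by
      rw [← inner_conj_symm, hz1, map_zero]
    have e2 : ⟪v.1, v.1⟫ = ⟪v.1, v.1⟫ + ⟪T (inclOp x), T (inclOp x)⟫ := by
      have e1 : ⟪shiftOp v.1, shiftOp v.1⟫ = ⟪v.1, v.1⟫ := inner_shiftOp_shiftOp _ _
      rw [← e1]
      conv_lhs => rw [hx]
      rw [inner_add_left, inner_add_right, inner_add_right, hz1, hz2, add_zero,
        inner_smul_left, inner_smul_right, ← mul_assoc, hconj, one_mul, zero_add, e1]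
    have hTx : T (inclOp x) = 0 :=
      inner_self_eq_zero.mp (left_eq_add.mp e2)
    rw [hTx, add_zero] at hx
    have hlamne : lam ≠ 0 := Complex.exp_ne_zero _
    have hcoef : ∀ n : ℕ, (v.1 : ∀ _ : ℕ, E) n = 0 := by
      have hco : ∀ n : ℕ, (shiftOp v.1 : ∀ _ : ℕ, E) n = lam • (v.1 : ∀ _ : ℕ, E) n := by
        intro n
        rw [hx, lp.coeFn_smul]
        rfl
      intro n
      induction n with
      | zero =>
        have h0 := (hco 0).symm
        rw [shiftOp_apply_zero] at h0
        rcases smul_eq_zero.mp h0 with h | h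
        · exact absurd h hlamne
        · exact h
      | succ n ih =>
        have h0 := (hco (n + 1)).symm
        rw [shiftOp_apply_succ, ih] at h0
        rcases smul_eq_zero.mp h0 with h | h
        · exact absurd h hlamne
        · exact h
    have hv1 : v.1 = 0 := by
      apply lp.ext
      funext n
      rw [hcoef n]
      simp
    exact hvne (Prod.ext hv1 h2)
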